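/- In the Perfekt setup, assume condition (A): the closed unit ball of (E₀, ‖·‖_∞) is dense in the closed unit ball of (E, ‖·‖_∞) with respect to the norm of X. Then E₀ is an M-ideal in (E, ‖·‖_∞). -/

import Mathlib

/-- A bounded continuous function vanishes at infinity if `{t | ε ≤ ‖f t‖}` is compact
for every `ε > 0`. -/
def ZeroAtInfty {L Y : Type*} [TopologicalSpace L] [NormedAddCommGroup Y]
    (f : BoundedContinuousFunction L Y) : Prop :=
  ∀ ε > (0 : ℝ), IsCompact {t : L | ε ≤ ‖f t‖}

/-- The subspace of `C_b(L, Y)` of functions vanishing at infinity, i.e. `C₀(L, Y)`. -/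
def zeroAtInftySubmodule (L Y : Type*) [TopologicalSpace L] [NormedAddCommGroup Y]
    [NormedSpace ℝ Y] : Submodule ℝ (BoundedContinuousFunction L Y) where
  carrier := {f | ZeroAtInfty f}
  zero_mem' := by
    intro ε hε
    have h : {t : L | ε ≤ ‖(0 : BoundedContinuousFunction L Y) t‖} = ∅ := by
      ext t
      simp only [BoundedContinuousFunction.coe_zero, Pi.zero_apply, norm_zero,
        Set.mem_setOf_eq, Set.mem_empty_iff_false, iff_false, not_le]
      exact hε
    rw [h]; exact isCompact_empty
  add_mem' := by
    rintro f g hf hg ε hε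
    have h := (hf (ε / 2) (by linarith)).union (hg (ε / 2) (by linarith))
    refine h.of_isClosed_subset (isClosed_le continuous_const ((f + g).continuous.norm)) ?_
    intro t ht
    have ht' : ε ≤ ‖(f + g) t‖ := ht
    by_contra hc
    simp only [Set.mem_union, Set.mem_setOf_eq, not_or, not_le] at hc
    have hb : ‖(f + g) t‖ ≤ ‖f t‖ + ‖g t‖ := by
      rw [BoundedContinuousFunction.add_apply]; exact norm_add_le _ _
    linarith [hc.1, hc.2]
  smul_mem' := by
    rintro c f hf ε hε
    by_cases hc : c = 0
    · subst hc
      have h : {t : L | ε ≤ ‖((0 : ℝ) • f) t‖} = ∅ := by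
        ext t
        simp only [Set.mem_setOf_eq, Set.mem_empty_iff_false, iff_false, not_le]
        rw [BoundedContinuousFunction.coe_smul]
        simpa using hε
      rw [h]; exact isCompact_empty
    · have hcn : (0 : ℝ) < ‖c‖ := norm_pos_iff.mpr hc
      have h := hf (ε / ‖c‖) (by positivity)
      refine h.of_isClosed_subset (isClosed_le continuous_const ((c • f).continuous.norm)) ?_
      intro t ht
      have ht' : ε ≤ ‖(c • f) t‖ := ht
      have heq : ‖(c • f) t‖ = ‖c‖ * ‖f t‖ := by
        rw [BoundedContinuousFunction.coe_smul]; simp [norm_smul]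
      rw [heq] at ht'
      have : ε / ‖c‖ ≤ ‖f t‖ := by
        rw [div_le_iff₀ hcn]; linarith [mul_comm ‖c‖ ‖f t‖]
      exact this

/-- The subspace `E` of `C_b(ℒ, Y)` consisting of the functions `x̂ : T ↦ T x` for `x ∈ X`. -/
def perfektE {X Y ι : Type*} [NormedAddCommGroup X] [NormedSpace ℝ X]
    [NormedAddCommGroup Y] [NormedSpace ℝ Y] [TopologicalSpace ι]
    (T : ι → X →L[ℝ] Y) : Submodule ℝ (BoundedContinuousFunction ι Y) where
  carrier := {f | ∃ x : X, ∀ i, f i = T i x}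
  zero_mem' := ⟨0, fun i => by simp⟩
  add_mem' := by
    rintro f g ⟨x, hx⟩ ⟨y, hy⟩
    exact ⟨x + y, fun i => by simp [hx i, hy i]⟩
  smul_mem' := by
    rintro c f ⟨x, hx⟩
    exact ⟨c • x, fun i => by simp [hx i]⟩

/-- A subset `E₀` of a Banach space `E` is an *M-ideal* in `E` if there is a bounded linear
projection `P` on the dual `E*` whose kernel is the annihilator of `E₀` and which satisfies
`‖φ‖ = ‖P φ‖ + ‖φ - P φ‖` for every `φ ∈ E*`. -/
def IsMIdeal {E : Type*} [NormedAddCommGroup E] [NormedSpace ℝ E] (E₀ : Set E) : Prop :=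
  ∃ P : (E →L[ℝ] ℝ) →L[ℝ] (E →L[ℝ] ℝ),
    (∀ φ, P (P φ) = P φ) ∧
    (∀ φ, P φ = 0 ↔ ∀ y ∈ E₀, φ y = 0) ∧
    (∀ φ, ‖φ‖ = ‖P φ‖ + ‖φ - P φ‖)

set_option linter.unusedSectionVars false

namespace PerfektProof

open Filter Topology BoundedContinuousFunction Set

section Basic

variable {X Y ι : Type*}
  [NormedAddCommGroup X] [NormedSpace ℝ X] [CompleteSpace X]
  [NormedAddCommGroup Y] [NormedSpace ℝ Y] [CompleteSpace Y]
  [TopologicalSpace ι] [LocallyCompactSpace ι] [T2Space ι]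

lemma zeroAtInfty_zero : ZeroAtInfty (0 : BoundedContinuousFunction ι Y) := by
  intro ε hε
  have h : {t : ι | ε ≤ ‖(0 : BoundedContinuousFunction ι Y) t‖} = ∅ := by
    ext t; simp [not_le, hε]
  rw [h]; exact isCompact_empty

lemma zeroAtInfty_neg {f : BoundedContinuousFunction ι Y} (hf : ZeroAtInfty f) :
    ZeroAtInfty (-f) := by
  intro ε hε
  have h : {t : ι | ε ≤ ‖(-f) t‖} = {t : ι | ε ≤ ‖f t‖} := by
    ext t; simp
  rw [h]; exact hf ε hε

variable (T : ι → X →L[ℝ] Y)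

lemma mem_perfektE_iff {f : BoundedContinuousFunction ι Y} :
    f ∈ perfektE T ↔ ∃ x : X, ∀ i, f i = T i x := Iff.rfl

/-- The witness of an element of `E`. -/
noncomputable def wit (f : ↥(perfektE T)) : X :=
  ((mem_perfektE_iff T).mp f.2).choose

lemma wit_spec (f : ↥(perfektE T)) :
    ∀ i, (f : BoundedContinuousFunction ι Y) i = T i (wit T f) :=
  ((mem_perfektE_iff T).mp f.2).choose_spec

variable {T}
variable (hsep : ∀ x : X, (∃ C : ℝ, ∀ i, ‖T i x‖ ≤ C) → (∀ i, T i x = 0) → x = 0)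

include hsep in
lemma wit_unique {f : ↥(perfektE T)} {x : X}
    (hx : ∀ i, (f : BoundedContinuousFunction ι Y) i = T i x) : wit T f = x := by
  have h := wit_spec T f
  have hz : ∀ i, T i (wit T f - x) = 0 := by
    intro i
    rw [map_sub, ← h i, ← hx i, sub_self]
  have := hsep (wit T f - x) ⟨0, fun i => by rw [hz i]; simp⟩ hz
  exact sub_eq_zero.mp this

include hsep in
lemma wit_add (f g : ↥(perfektE T)) : wit T (f + g) = wit T f + wit T g := by
  apply wit_unique hsep
  intro i
  have : ((f + g : ↥(perfektE T)) : BoundedContinuousFunction ι Y) i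
      = (f : BoundedContinuousFunction ι Y) i + (g : BoundedContinuousFunction ι Y) i := by
    rfl
  rw [this, wit_spec T f i, wit_spec T g i, map_add]

include hsep in
lemma wit_smul (c : ℝ) (f : ↥(perfektE T)) : wit T (c • f) = c • wit T f := by
  apply wit_unique hsep
  intro i
  have : ((c • f : ↥(perfektE T)) : BoundedContinuousFunction ι Y) i
      = c • (f : BoundedContinuousFunction ι Y) i := rfl
  rw [this, wit_spec T f i, map_smul]

include hsep in
lemma wit_sub (f g : ↥(perfektE T)) : wit T (f - g) = wit T f - wit T g := by
  have h1 : f - g + g = f := by abel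
  have := wit_add hsep (f - g) g
  rw [h1] at this
  exact eq_sub_of_add_eq this.symm

omit hsep

lemma exists_bound_on_compact (hTcont : ∀ x : X, Continuous fun i => T i x)
    {K : Set ι} (hK : IsCompact K) : ∃ C : ℝ, 0 ≤ C ∧ ∀ i ∈ K, ‖T i‖ ≤ C := by
  have h : ∀ x : X, ∃ C, ∀ i : K, ‖(fun i : K => T i.1) i x‖ ≤ C := by
    intro x
    have hcpt : IsCompact ((fun i => ‖T i x‖) '' K) := hK.image ((hTcont x).norm)
    rcases hcpt.bddAbove with ⟨C, hC⟩
    exact ⟨C, fun i => hC ⟨i.1, i.2, rfl⟩⟩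
  obtain ⟨C, hC⟩ := banach_steinhaus h
  exact ⟨max C 0, le_max_right _ _, fun i hi => le_trans (hC ⟨i, hi⟩) (le_max_left _ _)⟩

end Basic

section Tight

variable {Y ι : Type*}
  [NormedAddCommGroup Y] [NormedSpace ℝ Y]
  [TopologicalSpace ι] [LocallyCompactSpace ι] [T2Space ι]

lemma tight_contradiction (Φ : BoundedContinuousFunction ι Y →L[ℝ] ℝ)
    (h : ℕ → BoundedContinuousFunction ι Y) (C : ℝ) (hC : ∀ n, ‖h n‖ ≤ C)
    (h0 : ∀ n, ZeroAtInfty (h n))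
    (hc : ∀ K : Set ι, IsCompact K → ∀ δ > (0 : ℝ), ∃ n, ∀ t ∈ K, ‖h n t‖ ≤ δ)
    {ε : ℝ} (hε : 0 < ε) (hlb : ∀ n, ε ≤ Φ (h n)) : False := by
  classical
  set M : ℝ := ‖Φ‖ + 1 with hM
  have hΦM : ‖Φ‖ ≤ M := by simp [hM]
  have hM0 : 0 < M := by rw [hM]; positivity
  set δ : ℝ := ε / (4 * M) with hδdef
  have hδ : 0 < δ := by positivity
  set C' : ℝ := max C 0 with hC'
  have hC'0 : 0 ≤ C' := le_max_right _ _
  have hCC' : C ≤ C' := le_max_left _ _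
  -- Urysohn cutoffs
  have urycut : ∀ s : Set ι, IsCompact s → ∃ χ : C(ι, ℝ),
      Set.EqOn χ 1 s ∧ HasCompactSupport χ ∧ ∀ x, χ x ∈ Set.Icc (0 : ℝ) 1 := by
    intro s hs
    rcases exists_continuous_one_zero_of_isCompact hs isClosed_empty (by simp) with
      ⟨χ, h1, _, h2, h3⟩
    exact ⟨χ, h1, h2, h3⟩
  choose cut hcut1 hcut2 hcut3 using urycut
  -- pick small index for a compact set
  have pickn : ∀ s : Set ι, IsCompact s → ∃ n, ∀ t ∈ s, ‖h n t‖ ≤ δ := fun s hs => hc s hs δ hδ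
  choose nn hnn using pickn
  -- state recursion
  let Cpt := {s : Set ι // IsCompact s}
  have hA : ∀ s : Cpt, IsCompact {t : ι | δ ≤ ‖h (nn s.1 s.2) t‖} := fun s => h0 _ δ hδ
  let χf : Cpt → C(ι, ℝ) := fun s => cut _ (hA s)
  let nxt : Cpt → Cpt := fun s =>
    ⟨s.1 ∪ tsupport (χf s), s.2.union ((hcut2 _ (hA s)))⟩
  let st : ℕ → Cpt := fun j => Nat.rec ⟨∅, isCompact_empty⟩ (fun _ s => nxt s) j
  have st_succ : ∀ j, st (j + 1) = nxt (st j) := fun j => rfl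
  have st_mono : Monotone fun j => (st j).1 := by
    apply monotone_nat_of_le_succ
    intro j
    rw [st_succ j]
    exact Set.subset_union_left
  set k : ℕ → ℕ := fun j => nn (st j).1 (st j).2 with hk
  -- χ j equals one on the level set of h (k j)
  have χ_one : ∀ j t, δ ≤ ‖h (k j) t‖ → χf (st j) t = 1 := by
    intro j t ht
    exact hcut1 _ (hA (st j)) ht
  have χ_mem : ∀ j t, χf (st j) t ∈ Set.Icc (0 : ℝ) 1 := fun j t => hcut3 _ (hA (st j)) t
  have supp_sub : ∀ j, tsupport (χf (st j)) ⊆ (st (j + 1)).1 := by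
    intro j
    rw [st_succ j]
    exact Set.subset_union_right
  have hsmall : ∀ j t, t ∈ (st j).1 → ‖h (k j) t‖ ≤ δ := fun j t ht => hnn _ _ t ht
  -- the product weights
  set w : ℕ → ι → ℝ := fun j t => ∏ i ∈ Finset.range j, (1 - χf (st i) t) with hw
  have w_cont : ∀ j, Continuous (w j) := by
    intro j
    exact continuous_finset_prod _ fun i _ => continuous_const.sub (χf (st i)).continuous
  have w_mem : ∀ j t, w j t ∈ Set.Icc (0 : ℝ) 1 := by
    intro j t
    constructor
    · exact Finset.prod_nonneg fun i _ => by linarith [(χ_mem i t).2]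
    · exact Finset.prod_le_one (fun i _ => by linarith [(χ_mem i t).2])
        (fun i _ => by linarith [(χ_mem i t).1])
  -- the disjointified functions
  have hvb : ∀ j t, ‖w j t • h (k j) t‖ ≤ C' := by
    intro j t
    rw [norm_smul]
    have h1 : ‖w j t‖ ≤ 1 := by
      rw [Real.norm_eq_abs, abs_le]
      exact ⟨by linarith [(w_mem j t).1], (w_mem j t).2⟩
    calc ‖w j t‖ * ‖h (k j) t‖ ≤ 1 * ‖h (k j) t‖ :=
          mul_le_mul_of_nonneg_right h1 (norm_nonneg _)
      _ = ‖h (k j) t‖ := one_mul _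
      _ ≤ ‖h (k j)‖ := norm_coe_le_norm _ _
      _ ≤ C' := le_trans (hC _) hCC'
  set v : ℕ → BoundedContinuousFunction ι Y := fun j =>
    BoundedContinuousFunction.ofNormedAddCommGroup (fun t => w j t • h (k j) t)
      ((w_cont j).smul (h (k j)).continuous) C' (hvb j) with hv
  have v_apply : ∀ j t, v j t = w j t • h (k j) t := fun j t => rfl
  -- v j is close to h (k j)
  have hclose : ∀ j, ‖v j - h (k j)‖ ≤ δ := by
    intro j
    rw [BoundedContinuousFunction.norm_le hδ.le]
    intro t
    rw [BoundedContinuousFunction.sub_apply, v_apply]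
    by_cases hsup : ∃ i < j, t ∈ tsupport (χf (st i))
    · obtain ⟨i, hij, hi⟩ := hsup
      have ht : t ∈ (st j).1 := st_mono (Nat.succ_le_of_lt hij) (supp_sub i hi)
      have : ‖w j t • h (k j) t - h (k j) t‖ = ‖w j t - 1‖ * ‖h (k j) t‖ := by
        rw [show w j t • h (k j) t - h (k j) t = (w j t - 1) • h (k j) t by
          rw [sub_smul, one_smul], norm_smul]
      rw [this]
      have h1 : ‖w j t - 1‖ ≤ 1 := by
        rw [Real.norm_eq_abs, abs_le]
        exact ⟨by linarith [(w_mem j t).1], by linarith [(w_mem j t).2]⟩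
      calc ‖w j t - 1‖ * ‖h (k j) t‖ ≤ 1 * δ := by
            apply mul_le_mul h1 (hsmall j t ht) (norm_nonneg _) (by norm_num)
        _ = δ := one_mul _
    · push_neg at hsup
      have : w j t = 1 := by
        rw [hw]
        apply Finset.prod_eq_one
        intro i hi
        rw [Finset.mem_range] at hi
        have : χf (st i) t = 0 := image_eq_zero_of_notMem_tsupport (hsup i hi)
        rw [this]; ring
      rw [this, one_smul, sub_self, norm_zero]
      exact hδ.le
  -- pointwise bound for sums of the v's
  have hterm_small : ∀ j t, ¬ δ ≤ ‖h (k j) t‖ → ‖v j t‖ ≤ δ := by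
    intro j t hj
    push_neg at hj
    rw [v_apply, norm_smul]
    have h1 : ‖w j t‖ ≤ 1 := by
      rw [Real.norm_eq_abs, abs_le]
      exact ⟨by linarith [(w_mem j t).1], by linarith [(w_mem j t).2]⟩
    calc ‖w j t‖ * ‖h (k j) t‖ ≤ 1 * δ :=
          mul_le_mul h1 hj.le (norm_nonneg _) (by norm_num)
      _ = δ := one_mul _
  have hsum : ∀ m t, ∑ j ∈ Finset.range m, ‖v j t‖ ≤ C' + m * δ := by
    intro m t
    rw [← Finset.sum_filter_add_sum_filter_not (Finset.range m)
      (fun j => δ ≤ ‖h (k j) t‖) (fun j => ‖v j t‖)]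
    have h2 : ∑ j ∈ (Finset.range m).filter (fun j => ¬ δ ≤ ‖h (k j) t‖), ‖v j t‖
        ≤ (m : ℝ) * δ := by
      have := Finset.sum_le_card_nsmul
        ((Finset.range m).filter (fun j => ¬ δ ≤ ‖h (k j) t‖)) (fun j => ‖v j t‖) δ
        (fun j hj => hterm_small j t (Finset.mem_filter.mp hj).2)
      rw [nsmul_eq_mul] at this
      refine le_trans this ?_
      have hcard : (((Finset.range m).filter (fun j => ¬ δ ≤ ‖h (k j) t‖)).card : ℝ)
          ≤ (m : ℝ) := by
        exact_mod_cast le_trans (Finset.card_filter_le _ _) (le_of_eq (Finset.card_range m))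
      exact mul_le_mul_of_nonneg_right hcard hδ.le
    have h1 : ∑ j ∈ (Finset.range m).filter (fun j => δ ≤ ‖h (k j) t‖), ‖v j t‖ ≤ C' := by
      set B := (Finset.range m).filter (fun j => δ ≤ ‖h (k j) t‖) with hBdef
      rcases B.eq_empty_or_nonempty with hB | hB
      · rw [hB, Finset.sum_empty]; exact hC'0
      · have hmem : ∀ j ∈ B, δ ≤ ‖h (k j) t‖ := fun j hj => (Finset.mem_filter.mp hj).2
        set j₀ := B.min' hB with hj₀def
        have hj₀ : j₀ ∈ B := B.min'_mem hB
        have hzero : ∀ j ∈ B, j ≠ j₀ → ‖v j t‖ = 0 := by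
          intro j hj hne
          have hlt : j₀ < j := lt_of_le_of_ne (B.min'_le j hj) (Ne.symm hne)
          have hχ : χf (st j₀) t = 1 := χ_one j₀ t (hmem j₀ hj₀)
          have hw0 : w j t = 0 := by
            rw [hw]
            apply Finset.prod_eq_zero (Finset.mem_range.mpr hlt)
            rw [hχ]; ring
          rw [v_apply, hw0, zero_smul, norm_zero]
        have := Finset.sum_eq_single_of_mem j₀ hj₀ (fun j hj hne => hzero j hj hne)
        rw [this]
        exact le_trans (hvb j₀ t) (le_refl _)
    exact add_le_add h1 h2
  -- the partial sums
  set gm : ℕ → BoundedContinuousFunction ι Y := fun m => ∑ j ∈ Finset.range m, v j with hgm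
  have hgm_norm : ∀ m : ℕ, ‖gm m‖ ≤ C' + m * δ := by
    intro m
    have hpos : (0 : ℝ) ≤ C' + m * δ := by positivity
    rw [BoundedContinuousFunction.norm_le hpos]
    intro t
    calc ‖gm m t‖ = ‖∑ j ∈ Finset.range m, v j t‖ := by
          rw [hgm, BoundedContinuousFunction.sum_apply]
      _ ≤ ∑ j ∈ Finset.range m, ‖v j t‖ := norm_sum_le _ _
      _ ≤ C' + m * δ := hsum m t
  have hΦv : ∀ j, ε - M * δ ≤ Φ (v j) := by
    intro j
    have h1 : Φ (h (k j)) - Φ (v j) ≤ M * δ := by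
      have : Φ (h (k j)) - Φ (v j) = Φ (h (k j) - v j) := (map_sub Φ _ _).symm
      rw [this]
      calc Φ (h (k j) - v j) ≤ ‖Φ (h (k j) - v j)‖ := le_abs_self _
        _ ≤ ‖Φ‖ * ‖h (k j) - v j‖ := Φ.le_opNorm _
        _ ≤ M * δ := by
            apply mul_le_mul hΦM ?_ (norm_nonneg _) hM0.le
            rw [norm_sub_rev]; exact hclose j
    linarith [hlb (k j)]
  have hΦgm : ∀ m : ℕ, (m : ℝ) * (ε - M * δ) ≤ Φ (gm m) := by
    intro m
    have : Φ (gm m) = ∑ j ∈ Finset.range m, Φ (v j) := by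
      rw [hgm]; exact map_sum Φ _ _
    rw [this]
    have := Finset.card_nsmul_le_sum (Finset.range m) (fun j => Φ (v j)) (ε - M * δ)
      (fun j _ => hΦv j)
    rw [Finset.card_range, nsmul_eq_mul] at this
    exact this
  have hub : ∀ m : ℕ, Φ (gm m) ≤ M * (C' + m * δ) := by
    intro m
    calc Φ (gm m) ≤ ‖Φ (gm m)‖ := le_abs_self _
      _ ≤ ‖Φ‖ * ‖gm m‖ := Φ.le_opNorm _
      _ ≤ M * (C' + m * δ) := by
          apply mul_le_mul hΦM (hgm_norm m) (norm_nonneg _) hM0.le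
  have hMδ : M * δ = ε / 4 := by
    rw [hδdef]; field_simp
  obtain ⟨m, hm⟩ := exists_nat_gt (2 * M * C' / ε)
  have key : (m : ℝ) * (ε - M * δ) ≤ M * (C' + m * δ) := le_trans (hΦgm m) (hub m)
  rw [hMδ] at key
  have hexp : M * (C' + (m : ℝ) * δ) = M * C' + (m : ℝ) * (M * δ) := by ring
  rw [hexp, hMδ] at key
  have hm2 : (m : ℝ) * (ε / 2) ≤ M * C' := by linarith
  have hm3 : 2 * M * C' / ε < (m : ℝ) := hm
  have : 2 * M * C' / ε * (ε / 2) < (m : ℝ) * (ε / 2) := by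
    apply mul_lt_mul_of_pos_right hm3 (by positivity)
  rw [div_mul_eq_mul_div, mul_comm] at this
  have heq : ε / 2 * (2 * M * C') / ε = M * C' := by
    field_simp
  rw [heq] at this
  linarith

lemma tendsto_zero_of_small_on_compacts (Φ : BoundedContinuousFunction ι Y →L[ℝ] ℝ)
    (h : ℕ → BoundedContinuousFunction ι Y) (C : ℝ) (hC : ∀ n, ‖h n‖ ≤ C)
    (h0 : ∀ n, ZeroAtInfty (h n))
    (hc : ∀ K : Set ι, IsCompact K → ∀ δ > (0 : ℝ), ∀ᶠ n in atTop, ∀ t ∈ K, ‖h n t‖ ≤ δ) :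
    Tendsto (fun n => Φ (h n)) atTop (𝓝 0) := by
  rw [NormedAddCommGroup.tendsto_nhds_zero]
  by_contra hcon
  push_neg at hcon
  obtain ⟨ε, hε, hfreq⟩ : ∃ ε > (0 : ℝ), ∃ᶠ n in atTop, ε ≤ ‖Φ (h n)‖ := by
    obtain ⟨ε, hε, hf⟩ := hcon
    exact ⟨ε, hε, hf⟩
  obtain ⟨σ, hσmono, hσP⟩ := Filter.extraction_of_frequently_atTop hfreq
  have hdisj : (∃ᶠ n in atTop, ε ≤ Φ (h (σ n))) ∨ (∃ᶠ n in atTop, ε ≤ -Φ (h (σ n))) := by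
    rw [← Filter.frequently_or_distrib]
    apply Filter.Frequently.of_forall
    intro n
    exact le_abs.mp (by rw [← Real.norm_eq_abs]; exact hσP n)
  have hsub : ∀ (τ : ℕ → ℕ), StrictMono τ →
      ∀ K : Set ι, IsCompact K → ∀ δ > (0 : ℝ), ∃ n, ∀ t ∈ K, ‖h (τ n) t‖ ≤ δ := by
    intro τ hτ K hK δ hδ
    obtain ⟨N, hN⟩ := Filter.eventually_atTop.mp (hc K hK δ hδ)
    exact ⟨N, hN (τ N) hτ.le_apply⟩
  rcases hdisj with hpos | hneg
  · obtain ⟨σ', hσ'mono, hσ'P⟩ := Filter.extraction_of_frequently_atTop hpos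
    exact tight_contradiction Φ (fun n => h (σ (σ' n))) C (fun n => hC _)
      (fun n => h0 _) (hsub (σ ∘ σ') (hσmono.comp hσ'mono)) hε hσ'P
  · obtain ⟨σ', hσ'mono, hσ'P⟩ := Filter.extraction_of_frequently_atTop hneg
    refine tight_contradiction (-Φ) (fun n => h (σ (σ' n))) C (fun n => hC _)
      (fun n => h0 _) (hsub (σ ∘ σ') (hσmono.comp hσ'mono)) hε ?_
    intro n
    rw [ContinuousLinearMap.neg_apply]
    exact hσ'P n

end Tight

section Level2

variable {X Y ι : Type*}
  [NormedAddCommGroup X] [NormedSpace ℝ X] [CompleteSpace X]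
  [NormedAddCommGroup Y] [NormedSpace ℝ Y] [CompleteSpace Y]
  [TopologicalSpace ι] [LocallyCompactSpace ι] [T2Space ι]
  {T : ι → X →L[ℝ] Y}

/-- The crucial weak-null lemma: a bounded sequence in `E₀` whose witnesses tend to `0`
in the norm of `X` is weakly null in `E`. -/
lemma null_lemma (hTcont : ∀ x : X, Continuous fun i => T i x)
    (φ : ↥(perfektE T) →L[ℝ] ℝ) (b : ℕ → ↥(perfektE T)) (C : ℝ)
    (hb : ∀ n, ‖b n‖ ≤ C)
    (h0 : ∀ n, ZeroAtInfty ((b n : BoundedContinuousFunction ι Y)))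
    (hw : Tendsto (fun n => ‖wit T (b n)‖) atTop (𝓝 0)) :
    Tendsto (fun n => φ (b n)) atTop (𝓝 0) := by
  obtain ⟨Φ, hΦext, -⟩ := exists_extension_norm_eq (perfektE T) φ
  have heq : (fun n => φ (b n)) = fun n => Φ ((b n : BoundedContinuousFunction ι Y)) := by
    funext n
    exact (hΦext (b n)).symm
  rw [heq]
  apply tendsto_zero_of_small_on_compacts Φ _ C
    (fun n => by rw [← Submodule.coe_norm]; exact hb n) h0
  intro K hK δ hδ
  obtain ⟨CK, hCK0, hCK⟩ := exists_bound_on_compact hTcont hK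
  have hq : (0 : ℝ) < δ / (CK + 1) := by positivity
  filter_upwards [hw.eventually_lt_const hq] with n hn t ht
  rw [wit_spec T (b n) t]
  calc ‖T t (wit T (b n))‖ ≤ ‖T t‖ * ‖wit T (b n)‖ := (T t).le_opNorm _
    _ ≤ CK * (δ / (CK + 1)) := by
        apply mul_le_mul (hCK t ht) (le_of_lt ?_) (norm_nonneg _) hCK0
        simpa using hn
    _ ≤ δ := by
        rw [div_eq_mul_inv, ← mul_assoc]
        have h1 : CK * δ * (CK + 1)⁻¹ ≤ (CK + 1) * δ * (CK + 1)⁻¹ := by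
          apply mul_le_mul_of_nonneg_right ?_ (by positivity)
          nlinarith
        calc CK * δ * (CK + 1)⁻¹ ≤ (CK + 1) * δ * (CK + 1)⁻¹ := h1
          _ = δ := by field_simp

/-- Normalized version of the density hypothesis (A). -/
lemma exists_approx
    (hsep : ∀ x : X, (∃ C : ℝ, ∀ i, ‖T i x‖ ≤ C) → (∀ i, T i x = 0) → x = 0)
    (hA : ∀ f ∈ perfektE T, ‖f‖ ≤ 1 → ∀ x : X, (∀ i, f i = T i x) → ∀ ε > (0 : ℝ),
      ∃ g ∈ perfektE T ⊓ zeroAtInftySubmodule ι Y, ‖g‖ ≤ 1 ∧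
        ∃ x₀ : X, (∀ i, g i = T i x₀) ∧ ‖x - x₀‖ ≤ ε)
    (f : ↥(perfektE T)) (n : ℕ) :
    ∃ g : ↥(perfektE T), ZeroAtInfty ((g : BoundedContinuousFunction ι Y)) ∧ ‖g‖ ≤ ‖f‖ ∧
      ‖wit T f - wit T g‖ ≤ ‖f‖ / (n + 1) := by
  by_cases hf : f = 0
  · refine ⟨0, ?_, by simp, ?_⟩
    · exact zeroAtInfty_zero
    · have hw0 : wit T (0 : ↥(perfektE T)) = 0 := wit_unique hsep (fun i => by simp)
      rw [hf, hw0, sub_self, norm_zero]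
      positivity
  · have hfn : (0 : ℝ) < ‖f‖ := norm_pos_iff.mpr hf
    set u : BoundedContinuousFunction ι Y := ‖f‖⁻¹ • (f : BoundedContinuousFunction ι Y)
      with hu
    have hun : ‖u‖ ≤ 1 := by
      rw [hu, norm_smul, Real.norm_eq_abs, abs_of_pos (by positivity), ← Submodule.coe_norm]
      rw [inv_mul_cancel₀ (ne_of_gt hfn)]
    have humem : u ∈ perfektE T := Submodule.smul_mem _ _ f.2
    have huwit : ∀ i, u i = T i (‖f‖⁻¹ • wit T f) := by
      intro i
      rw [hu, BoundedContinuousFunction.smul_apply, wit_spec T f i, map_smul]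
    obtain ⟨g₀, hg₀mem, hg₀n, x₀, hx₀, hclose⟩ :=
      hA u humem hun (‖f‖⁻¹ • wit T f) huwit (1 / (n + 1)) (by positivity)
    obtain ⟨hg₀E, hg₀Z⟩ := Submodule.mem_inf.mp hg₀mem
    refine ⟨⟨‖f‖ • g₀, Submodule.smul_mem _ _ hg₀E⟩, ?_, ?_, ?_⟩
    · exact Submodule.smul_mem (zeroAtInftySubmodule ι Y) (‖f‖) hg₀Z
    · rw [Submodule.coe_norm]
      simp only [norm_smul, Real.norm_eq_abs, abs_of_pos hfn]
      calc ‖f‖ * ‖g₀‖ ≤ ‖f‖ * 1 := mul_le_mul_of_nonneg_left hg₀n hfn.le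
        _ = ‖f‖ := mul_one _
    · have hwg : wit T (⟨‖f‖ • g₀, Submodule.smul_mem _ _ hg₀E⟩ : ↥(perfektE T))
          = ‖f‖ • x₀ := by
        apply wit_unique hsep
        intro i
        show (‖f‖ • g₀) i = T i (‖f‖ • x₀)
        rw [BoundedContinuousFunction.smul_apply, hx₀ i, map_smul]
      rw [hwg]
      have : wit T f - ‖f‖ • x₀ = ‖f‖ • (‖f‖⁻¹ • wit T f - x₀) := by
        rw [smul_sub, smul_smul, mul_inv_cancel₀ (ne_of_gt hfn), one_smul]
      rw [this, norm_smul, Real.norm_eq_abs, abs_of_pos hfn]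
      calc ‖f‖ * ‖‖f‖⁻¹ • wit T f - x₀‖ ≤ ‖f‖ * (1 / (n + 1)) :=
            mul_le_mul_of_nonneg_left hclose hfn.le
        _ = ‖f‖ / (n + 1) := by ring

end Level2

section Pdef

variable {X Y ι : Type*}
  [NormedAddCommGroup X] [NormedSpace ℝ X] [CompleteSpace X]
  [NormedAddCommGroup Y] [NormedSpace ℝ Y] [CompleteSpace Y]
  [TopologicalSpace ι] [LocallyCompactSpace ι] [T2Space ι]
  {T : ι → X →L[ℝ] Y}

variable (hTcont : ∀ x : X, Continuous fun i => T i x)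
variable (hsep : ∀ x : X, (∃ C : ℝ, ∀ i, ‖T i x‖ ≤ C) → (∀ i, T i x = 0) → x = 0)
variable (hA : ∀ f ∈ perfektE T, ‖f‖ ≤ 1 → ∀ x : X, (∀ i, f i = T i x) → ∀ ε > (0 : ℝ),
      ∃ g ∈ perfektE T ⊓ zeroAtInftySubmodule ι Y, ‖g‖ ≤ 1 ∧
        ∃ x₀ : X, (∀ i, g i = T i x₀) ∧ ‖x - x₀‖ ≤ ε)

/-- A chosen sequence of elements of `E₀` approximating `f`. -/
noncomputable def apx (f : ↥(perfektE T)) (n : ℕ) : ↥(perfektE T) :=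
  (exists_approx hsep hA f n).choose

lemma apx_zai (f : ↥(perfektE T)) (n : ℕ) :
    ZeroAtInfty ((apx hsep hA f n : BoundedContinuousFunction ι Y)) :=
  (exists_approx hsep hA f n).choose_spec.1

lemma apx_norm (f : ↥(perfektE T)) (n : ℕ) : ‖apx hsep hA f n‖ ≤ ‖f‖ :=
  (exists_approx hsep hA f n).choose_spec.2.1

lemma apx_wit (f : ↥(perfektE T)) (n : ℕ) :
    ‖wit T f - wit T (apx hsep hA f n)‖ ≤ ‖f‖ / (n + 1) :=
  (exists_approx hsep hA f n).choose_spec.2.2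

include hTcont in
/-- Squeeze + weak-null combination. -/
lemma phi_tendsto_zero (φ : ↥(perfektE T) →L[ℝ] ℝ) (s : ℕ → ↥(perfektE T)) (C C' : ℝ)
    (hZ : ∀ n, ZeroAtInfty ((s n : BoundedContinuousFunction ι Y)))
    (hC : ∀ n, ‖s n‖ ≤ C)
    (hwit : ∀ n : ℕ, ‖wit T (s n)‖ ≤ C' / (n + 1)) :
    Tendsto (fun n => φ (s n)) atTop (𝓝 0) := by
  apply null_lemma hTcont φ s C hC hZ
  apply squeeze_zero (fun n => norm_nonneg _) hwit
  have h1 : Tendsto (fun n : ℕ => C' / n) atTop (𝓝 0) :=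
    tendsto_const_div_atTop_nhds_zero_nat C'
  have h2 : Tendsto (fun n : ℕ => C' / (n + 1 : ℕ)) atTop (𝓝 0) :=
    (Filter.tendsto_add_atTop_iff_nat 1).mpr h1
  convert h2 using 2 with n
  push_cast
  ring

lemma exists_Pval (φ : ↥(perfektE T) →L[ℝ] ℝ) (f : ↥(perfektE T)) :
    ∃ r : ℝ, Tendsto (fun n => φ (apx hsep hA f n)) (hyperfilter ℕ : Filter ℕ) (𝓝 r) := by
  have hbdd : ∀ n, φ (apx hsep hA f n) ∈ Set.Icc (-(‖φ‖ * ‖f‖)) (‖φ‖ * ‖f‖) := by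
    intro n
    have h1 : ‖φ (apx hsep hA f n)‖ ≤ ‖φ‖ * ‖f‖ := by
      calc ‖φ (apx hsep hA f n)‖ ≤ ‖φ‖ * ‖apx hsep hA f n‖ := φ.le_opNorm _
        _ ≤ ‖φ‖ * ‖f‖ := mul_le_mul_of_nonneg_left (apx_norm hsep hA f n) (ContinuousLinearMap.opNorm_nonneg φ)
    rw [Real.norm_eq_abs, abs_le] at h1
    exact ⟨h1.1, h1.2⟩
  have hle : ↑((hyperfilter ℕ : Ultrafilter ℕ).map (fun n => φ (apx hsep hA f n)))
      ≤ Filter.principal (Set.Icc (-(‖φ‖ * ‖f‖)) (‖φ‖ * ‖f‖)) := by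
    rw [Filter.le_principal_iff]
    rw [Ultrafilter.coe_map, Filter.mem_map]
    exact Filter.Eventually.of_forall hbdd
  obtain ⟨r, _, hr⟩ := isCompact_Icc.ultrafilter_le_nhds _ hle
  refine ⟨r, ?_⟩
  rwa [Ultrafilter.coe_map] at hr

/-- The value of the projected functional. -/
noncomputable def Pval (φ : ↥(perfektE T) →L[ℝ] ℝ) (f : ↥(perfektE T)) : ℝ :=
  (exists_Pval hsep hA φ f).choose

lemma tendsto_Pval (φ : ↥(perfektE T) →L[ℝ] ℝ) (f : ↥(perfektE T)) :
    Tendsto (fun n => φ (apx hsep hA f n)) (hyperfilter ℕ : Filter ℕ)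
      (𝓝 (Pval hsep hA φ f)) :=
  (exists_Pval hsep hA φ f).choose_spec

lemma Pval_eq {φ : ↥(perfektE T) →L[ℝ] ℝ} {f : ↥(perfektE T)} {r : ℝ}
    (h : Tendsto (fun n => φ (apx hsep hA f n)) (hyperfilter ℕ : Filter ℕ) (𝓝 r)) :
    Pval hsep hA φ f = r :=
  tendsto_nhds_unique (tendsto_Pval hsep hA φ f) h

include hTcont in
lemma Pval_of_zeroAtInfty (φ : ↥(perfektE T) →L[ℝ] ℝ) {g : ↥(perfektE T)}
    (hg : ZeroAtInfty ((g : BoundedContinuousFunction ι Y))) :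
    Pval hsep hA φ g = φ g := by
  apply Pval_eq hsep hA
  have hdiff : Tendsto (fun n => φ (apx hsep hA g n - g)) atTop (𝓝 0) := by
    apply phi_tendsto_zero hTcont φ _ (2 * ‖g‖) ‖g‖
    · intro n
      show ((apx hsep hA g n : BoundedContinuousFunction ι Y) - g) ∈ zeroAtInftySubmodule ι Y
      exact Submodule.sub_mem _ (apx_zai hsep hA g n) hg
    · intro n
      calc ‖apx hsep hA g n - g‖ ≤ ‖apx hsep hA g n‖ + ‖g‖ := norm_sub_le _ _
        _ ≤ 2 * ‖g‖ := by linarith [apx_norm hsep hA g n]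
    · intro n
      rw [wit_sub hsep, norm_sub_rev]
      exact apx_wit hsep hA g n
  have heq : ∀ n, φ (apx hsep hA g n) = φ (apx hsep hA g n - g) + φ g := by
    intro n
    rw [map_sub]
    ring
  have hconst : Tendsto (fun _ : ℕ => φ g) (hyperfilter ℕ : Filter ℕ) (𝓝 (φ g)) :=
    tendsto_const_nhds
  have := (hdiff.mono_left Nat.hyperfilter_le_atTop).add hconst
  rw [zero_add] at this
  exact Tendsto.congr (fun n => (heq n).symm) this

include hTcont in
lemma Pval_add_f (φ : ↥(perfektE T) →L[ℝ] ℝ) (f f' : ↥(perfektE T)) :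
    Pval hsep hA φ (f + f') = Pval hsep hA φ f + Pval hsep hA φ f' := by
  apply Pval_eq hsep hA
  set s : ℕ → ↥(perfektE T) :=
    fun n => apx hsep hA (f + f') n - apx hsep hA f n - apx hsep hA f' n with hs
  have hdiff : Tendsto (fun n => φ (s n)) atTop (𝓝 0) := by
    apply phi_tendsto_zero hTcont φ _ (‖f + f'‖ + ‖f‖ + ‖f'‖) (‖f + f'‖ + ‖f‖ + ‖f'‖)
    · intro n
      show ((s n : BoundedContinuousFunction ι Y)) ∈ zeroAtInftySubmodule ι Y
      rw [hs]
      exact Submodule.sub_mem _ (Submodule.sub_mem _ (apx_zai hsep hA (f + f') n)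
        (apx_zai hsep hA f n)) (apx_zai hsep hA f' n)
    · intro n
      rw [hs]
      calc ‖apx hsep hA (f + f') n - apx hsep hA f n - apx hsep hA f' n‖
          ≤ ‖apx hsep hA (f + f') n - apx hsep hA f n‖ + ‖apx hsep hA f' n‖ := norm_sub_le _ _
        _ ≤ ‖apx hsep hA (f + f') n‖ + ‖apx hsep hA f n‖ + ‖apx hsep hA f' n‖ := by
            linarith [norm_sub_le (apx hsep hA (f + f') n) (apx hsep hA f n)]
        _ ≤ ‖f + f'‖ + ‖f‖ + ‖f'‖ := by
            linarith [apx_norm hsep hA (f + f') n, apx_norm hsep hA f n,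
              apx_norm hsep hA f' n]
    · intro n
      rw [hs, wit_sub hsep, wit_sub hsep]
      have hw : wit T (f + f') = wit T f + wit T f' := wit_add hsep f f'
      have hkey : wit T (apx hsep hA (f + f') n) - wit T (apx hsep hA f n)
            - wit T (apx hsep hA f' n)
          = -((wit T (f + f') - wit T (apx hsep hA (f + f') n))
            - (wit T f - wit T (apx hsep hA f n))
            - (wit T f' - wit T (apx hsep hA f' n))) := by
        rw [hw]; abel
      rw [hkey, norm_neg]
      have h1 := apx_wit hsep hA (f + f') n
      have h2 := apx_wit hsep hA f n
      have h3 := apx_wit hsep hA f' n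
      have hn1 : (0:ℝ) < n + 1 := by positivity
      calc ‖(wit T (f + f') - wit T (apx hsep hA (f + f') n))
            - (wit T f - wit T (apx hsep hA f n))
            - (wit T f' - wit T (apx hsep hA f' n))‖
          ≤ ‖(wit T (f + f') - wit T (apx hsep hA (f + f') n))
            - (wit T f - wit T (apx hsep hA f n))‖
            + ‖wit T f' - wit T (apx hsep hA f' n)‖ := norm_sub_le _ _
        _ ≤ ‖wit T (f + f') - wit T (apx hsep hA (f + f') n)‖
            + ‖wit T f - wit T (apx hsep hA f n)‖
            + ‖wit T f' - wit T (apx hsep hA f' n)‖ := by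
            linarith [norm_sub_le (wit T (f + f') - wit T (apx hsep hA (f + f') n))
              (wit T f - wit T (apx hsep hA f n))]
        _ ≤ (‖f + f'‖ + ‖f‖ + ‖f'‖) / (n + 1) := by
            rw [add_div, add_div]
            exact add_le_add (add_le_add h1 h2) h3
  have heq : ∀ n, φ (apx hsep hA (f + f') n)
      = φ (s n) + (φ (apx hsep hA f n) + φ (apx hsep hA f' n)) := by
    intro n
    rw [hs]
    simp only [map_sub]
    ring
  have hlim := (hdiff.mono_left Nat.hyperfilter_le_atTop).add
    ((tendsto_Pval hsep hA φ f).add (tendsto_Pval hsep hA φ f'))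
  rw [zero_add] at hlim
  exact Tendsto.congr (fun n => (heq n).symm) hlim

include hTcont in
lemma Pval_smul_f (φ : ↥(perfektE T) →L[ℝ] ℝ) (c : ℝ) (f : ↥(perfektE T)) :
    Pval hsep hA φ (c • f) = c * Pval hsep hA φ f := by
  apply Pval_eq hsep hA
  set s : ℕ → ↥(perfektE T) := fun n => apx hsep hA (c • f) n - c • apx hsep hA f n with hs
  have hdiff : Tendsto (fun n => φ (s n)) atTop (𝓝 0) := by
    apply phi_tendsto_zero hTcont φ _ (‖c • f‖ + |c| * ‖f‖) (‖c • f‖ + |c| * ‖f‖)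
    · intro n
      show ((s n : BoundedContinuousFunction ι Y)) ∈ zeroAtInftySubmodule ι Y
      rw [hs]
      exact Submodule.sub_mem _ (apx_zai hsep hA (c • f) n)
        (Submodule.smul_mem _ c (apx_zai hsep hA f n))
    · intro n
      rw [hs]
      calc ‖apx hsep hA (c • f) n - c • apx hsep hA f n‖
          ≤ ‖apx hsep hA (c • f) n‖ + ‖c • apx hsep hA f n‖ := norm_sub_le _ _
        _ ≤ ‖c • f‖ + |c| * ‖f‖ := by
            have h1 := apx_norm hsep hA (c • f) n
            have h2 : ‖c • apx hsep hA f n‖ = |c| * ‖apx hsep hA f n‖ := by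
              rw [Submodule.coe_norm, Submodule.coe_norm, Submodule.coe_smul, norm_smul,
                Real.norm_eq_abs]
            have h3 := apx_norm hsep hA f n
            rw [h2]
            have : |c| * ‖apx hsep hA f n‖ ≤ |c| * ‖f‖ :=
              mul_le_mul_of_nonneg_left h3 (abs_nonneg c)
            linarith
    · intro n
      rw [hs, wit_sub hsep, wit_smul hsep]
      have hw : wit T (c • f) = c • wit T f := wit_smul hsep c f
      have hkey : wit T (apx hsep hA (c • f) n) - c • wit T (apx hsep hA f n)
          = -((wit T (c • f) - wit T (apx hsep hA (c • f) n))
            - c • (wit T f - wit T (apx hsep hA f n))) := by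
        rw [hw, smul_sub]; abel
      rw [hkey, norm_neg]
      have h1 := apx_wit hsep hA (c • f) n
      have h2 := apx_wit hsep hA f n
      calc ‖(wit T (c • f) - wit T (apx hsep hA (c • f) n))
            - c • (wit T f - wit T (apx hsep hA f n))‖
          ≤ ‖wit T (c • f) - wit T (apx hsep hA (c • f) n)‖
            + ‖c • (wit T f - wit T (apx hsep hA f n))‖ := norm_sub_le _ _
        _ ≤ (‖c • f‖ + |c| * ‖f‖) / (n + 1) := by
            rw [add_div, norm_smul, Real.norm_eq_abs]
            apply add_le_add h1
            calc |c| * ‖wit T f - wit T (apx hsep hA f n)‖ ≤ |c| * (‖f‖ / (n + 1)) :=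
                  mul_le_mul_of_nonneg_left h2 (abs_nonneg c)
              _ = |c| * ‖f‖ / (n + 1) := by ring
  have heq : ∀ n, φ (apx hsep hA (c • f) n) = φ (s n) + c * φ (apx hsep hA f n) := by
    intro n
    rw [hs]
    simp only [map_sub, map_smul]
    simp [smul_eq_mul]
  have hlim := (hdiff.mono_left Nat.hyperfilter_le_atTop).add
    ((tendsto_Pval hsep hA φ f).const_mul c)
  rw [zero_add] at hlim
  exact Tendsto.congr (fun n => (heq n).symm) hlim

lemma Pval_bound (φ : ↥(perfektE T) →L[ℝ] ℝ) (f : ↥(perfektE T)) :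
    ‖Pval hsep hA φ f‖ ≤ ‖φ‖ * ‖f‖ := by
  have h := (continuous_norm.tendsto (Pval hsep hA φ f)).comp (tendsto_Pval hsep hA φ f)
  apply le_of_tendsto h
  apply Filter.Eventually.of_forall
  intro n
  calc ‖φ (apx hsep hA f n)‖ ≤ ‖φ‖ * ‖apx hsep hA f n‖ := φ.le_opNorm _
    _ ≤ ‖φ‖ * ‖f‖ := mul_le_mul_of_nonneg_left (apx_norm hsep hA f n) (ContinuousLinearMap.opNorm_nonneg φ)

/-- The bounded linear functional `P φ`. -/
noncomputable def Pfun (φ : ↥(perfektE T) →L[ℝ] ℝ) : ↥(perfektE T) →L[ℝ] ℝ :=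
  LinearMap.mkContinuous
    { toFun := Pval hsep hA φ
      map_add' := Pval_add_f hTcont hsep hA φ
      map_smul' := Pval_smul_f hTcont hsep hA φ }
    ‖φ‖ (Pval_bound hsep hA φ)

lemma Pfun_apply (φ : ↥(perfektE T) →L[ℝ] ℝ) (f : ↥(perfektE T)) :
    Pfun hTcont hsep hA φ f = Pval hsep hA φ f := rfl

lemma Pfun_norm_le (φ : ↥(perfektE T) →L[ℝ] ℝ) : ‖Pfun hTcont hsep hA φ‖ ≤ ‖φ‖ :=
  LinearMap.mkContinuous_norm_le _ (norm_nonneg φ) _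

/-- The projection `P` on the dual space. -/
noncomputable def Pmap :
    (↥(perfektE T) →L[ℝ] ℝ) →L[ℝ] (↥(perfektE T) →L[ℝ] ℝ) :=
  LinearMap.mkContinuous
    { toFun := Pfun hTcont hsep hA
      map_add' := by
        intro φ φ'
        ext f
        show Pval hsep hA (φ + φ') f = Pval hsep hA φ f + Pval hsep hA φ' f
        apply Pval_eq hsep hA
        have h1 := (tendsto_Pval hsep hA φ f).add (tendsto_Pval hsep hA φ' f)
        exact Tendsto.congr (fun n => rfl) h1
      map_smul' := by
        intro c φ
        ext f
        show Pval hsep hA (c • φ) f = c * Pval hsep hA φ f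
        apply Pval_eq hsep hA
        have h1 := (tendsto_Pval hsep hA φ f).const_mul c
        exact Tendsto.congr (fun n => rfl) h1 }
    1 (fun φ => by
      rw [one_mul]
      exact Pfun_norm_le hTcont hsep hA φ)

lemma Pmap_apply (φ : ↥(perfektE T) →L[ℝ] ℝ) (f : ↥(perfektE T)) :
    Pmap hTcont hsep hA φ f = Pval hsep hA φ f := rfl

include hTcont in
lemma Pmap_idem (φ : ↥(perfektE T) →L[ℝ] ℝ) :
    Pmap hTcont hsep hA (Pmap hTcont hsep hA φ) = Pmap hTcont hsep hA φ := by
  ext f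
  rw [Pmap_apply, Pmap_apply]
  apply Pval_eq hsep hA
  have heq : ∀ n, (Pmap hTcont hsep hA φ) (apx hsep hA f n) = φ (apx hsep hA f n) := by
    intro n
    rw [Pmap_apply]
    exact Pval_of_zeroAtInfty hTcont hsep hA φ (apx_zai hsep hA f n)
  exact Tendsto.congr (fun n => (heq n).symm) (tendsto_Pval hsep hA φ f)

include hTcont in
lemma Pmap_zero_iff (φ : ↥(perfektE T) →L[ℝ] ℝ) :
    Pmap hTcont hsep hA φ = 0 ↔
      ∀ y : ↥(perfektE T), ZeroAtInfty ((y : BoundedContinuousFunction ι Y)) → φ y = 0 := by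
  constructor
  · intro h y hy
    have h1 := Pval_of_zeroAtInfty hTcont hsep hA φ hy
    rw [← h1, ← Pmap_apply hTcont hsep hA, h, ContinuousLinearMap.zero_apply]
  · intro h
    ext f
    rw [Pmap_apply, ContinuousLinearMap.zero_apply]
    apply Pval_eq hsep hA
    have heq : ∀ n, φ (apx hsep hA f n) = 0 := fun n => h _ (apx_zai hsep hA f n)
    exact Tendsto.congr (fun n => (heq n).symm) tendsto_const_nhds

lemma exists_norming {F : Type*} [NormedAddCommGroup F] [NormedSpace ℝ F]
    (ξ : F →L[ℝ] ℝ) {ε : ℝ} (hε : 0 < ε) : ∃ u : F, ‖u‖ ≤ 1 ∧ ‖ξ‖ - ε ≤ ξ u := by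
  by_cases h : ‖ξ‖ ≤ ε
  · exact ⟨0, by simp, by simp; linarith⟩
  · push_neg at h
    obtain ⟨u, hu1, hu2⟩ := ξ.exists_lt_apply_of_lt_opNorm (r := ‖ξ‖ - ε) (by linarith)
    rcases le_or_gt 0 (ξ u) with hpos | hneg
    · refine ⟨u, hu1.le, ?_⟩
      rw [Real.norm_eq_abs, abs_of_nonneg hpos] at hu2
      linarith
    · refine ⟨-u, by simpa using hu1.le, ?_⟩
      rw [map_neg]
      rw [Real.norm_eq_abs, abs_of_neg hneg] at hu2
      linarith

include hTcont in
set_option maxHeartbeats 1000000 in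
/-- The key geometric construction: an almost-norming element obtained by averaging
approximants along a chain of compact sets. -/
lemma exists_good_h (φ : ↥(perfektE T) →L[ℝ] ℝ) (f₁ g : ↥(perfektE T))
    (hf₁n : ‖f₁‖ ≤ 1) (hgzai : ZeroAtInfty ((g : BoundedContinuousFunction ι Y)))
    (hgn : ‖g‖ ≤ 1) {δ ε : ℝ} (hδ : 0 < δ) (hδ1 : δ ≤ 1) (hε : 0 < ε)
    (N : ℕ) (hN1 : 1 ≤ N) :
    ∃ h : ↥(perfektE T), ‖h‖ ≤ 1 + 2 * δ + 2 / N ∧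
      φ g + φ f₁ - Pval hsep hA φ f₁ - ε ≤ φ h := by
  classical
  have hNpos : (0:ℝ) < N := by exact_mod_cast Nat.lt_of_lt_of_le Nat.zero_lt_one hN1
  -- the approximation picker
  have pick : ∀ K : Set ι, IsCompact K → ∃ g' : ↥(perfektE T),
      ZeroAtInfty ((g' : BoundedContinuousFunction ι Y)) ∧ ‖g'‖ ≤ 1 ∧
      (∀ t ∈ K, ‖(f₁ : BoundedContinuousFunction ι Y) t
        - (g' : BoundedContinuousFunction ι Y) t‖ ≤ δ) ∧
      |φ g' - Pval hsep hA φ f₁| ≤ ε := by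
    intro K hK
    obtain ⟨CK, hCK0, hCK⟩ := exists_bound_on_compact hTcont hK
    have hev1 : ∀ᶠ n in (hyperfilter ℕ : Filter ℕ),
        |φ (apx hsep hA f₁ n) - Pval hsep hA φ f₁| < ε := by
      have := Metric.tendsto_nhds.mp (tendsto_Pval hsep hA φ f₁) ε hε
      apply this.mono
      intro n hn
      rwa [Real.dist_eq] at hn
    have htend : Tendsto (fun n : ℕ => CK * (‖f₁‖ / (n + 1))) atTop (𝓝 0) := by
      have h1 : Tendsto (fun n : ℕ => ‖f₁‖ / (n : ℝ)) atTop (𝓝 0) :=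
        tendsto_const_div_atTop_nhds_zero_nat ‖f₁‖
      have h2 : Tendsto (fun n : ℕ => ‖f₁‖ / ((n : ℝ) + 1)) atTop (𝓝 0) := by
        have := (Filter.tendsto_add_atTop_iff_nat 1).mpr h1
        convert this using 2 with n
        push_cast
        ring
      have := h2.const_mul CK
      simpa using this
    have hev2 : ∀ᶠ n : ℕ in (hyperfilter ℕ : Filter ℕ), CK * (‖f₁‖ / ((n:ℝ) + 1)) ≤ δ :=
      (htend.eventually_le_const hδ).filter_mono Nat.hyperfilter_le_atTop
    obtain ⟨n, hn1, hn2⟩ := (hev1.and hev2).exists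
    refine ⟨apx hsep hA f₁ n, apx_zai hsep hA f₁ n,
      le_trans (apx_norm hsep hA f₁ n) hf₁n, ?_, hn1.le⟩
    intro t ht
    rw [wit_spec T f₁ t, wit_spec T (apx hsep hA f₁ n) t, ← map_sub]
    calc ‖T t (wit T f₁ - wit T (apx hsep hA f₁ n))‖
        ≤ ‖T t‖ * ‖wit T f₁ - wit T (apx hsep hA f₁ n)‖ := (T t).le_opNorm _
      _ ≤ CK * (‖f₁‖ / (n + 1)) := by
          apply mul_le_mul (hCK t ht) (apx_wit hsep hA f₁ n) (norm_nonneg _) hCK0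
      _ ≤ δ := hn2
  choose pk pk_zai pk_norm pk_close pk_phi using pick
  -- the chain of compact sets
  set K₀ : Set ι := {t | δ ≤ ‖(g : BoundedContinuousFunction ι Y) t‖} with hK₀def
  have hK₀ : IsCompact K₀ := hgzai δ hδ
  let st : ℕ → {s : Set ι // IsCompact s} := fun j => Nat.rec ⟨K₀, hK₀⟩
    (fun _ s => ⟨s.1 ∪ {t | δ ≤ ‖((pk s.1 s.2 : ↥(perfektE T)) :
      BoundedContinuousFunction ι Y) t‖}, s.2.union (pk_zai s.1 s.2 δ hδ)⟩) j
  set gs : ℕ → ↥(perfektE T) := fun j => pk (st j).1 (st j).2 with hgsdef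
  have st_succ : ∀ j, (st (j + 1)).1 = (st j).1 ∪
      {t | δ ≤ ‖((gs j : ↥(perfektE T)) : BoundedContinuousFunction ι Y) t‖} := fun j => rfl
  have st_mono : Monotone fun j => (st j).1 := by
    apply monotone_nat_of_le_succ
    intro j
    rw [st_succ j]
    exact Set.subset_union_left
  have lvl_sub : ∀ j, {t | δ ≤ ‖((gs j : ↥(perfektE T)) :
      BoundedContinuousFunction ι Y) t‖} ⊆ (st (j + 1)).1 := by
    intro j
    rw [st_succ j]
    exact Set.subset_union_right
  have hK₀sub : ∀ j, K₀ ⊆ (st j).1 := fun j => st_mono (Nat.zero_le j)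
  have gs_zai := fun j => pk_zai (st j).1 (st j).2
  have gs_norm : ∀ j, ‖gs j‖ ≤ 1 := fun j => pk_norm (st j).1 (st j).2
  have gs_close : ∀ j, ∀ t ∈ (st j).1, ‖(f₁ : BoundedContinuousFunction ι Y) t
      - (gs j : BoundedContinuousFunction ι Y) t‖ ≤ δ :=
    fun j => pk_close (st j).1 (st j).2
  have gs_phi : ∀ j, |φ (gs j) - Pval hsep hA φ f₁| ≤ ε :=
    fun j => pk_phi (st j).1 (st j).2
  -- the average
  set gstar : ↥(perfektE T) := (N : ℝ)⁻¹ • ∑ j ∈ Finset.range N, gs j with hgstardef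
  refine ⟨g + f₁ - gstar, ?_, ?_⟩
  · -- norm bound
    have hpos : (0:ℝ) ≤ 1 + 2 * δ + 2 / N := by positivity
    rw [Submodule.coe_norm, BoundedContinuousFunction.norm_le hpos]
    intro t
    have hcoe : ((g + f₁ - gstar : ↥(perfektE T)) : BoundedContinuousFunction ι Y) t
        = (g : BoundedContinuousFunction ι Y) t
          + ((f₁ : BoundedContinuousFunction ι Y) t
            - (gstar : BoundedContinuousFunction ι Y) t) := by
      push_cast
      rw [BoundedContinuousFunction.sub_apply, BoundedContinuousFunction.add_apply]
      abel
    have hgstar_t : (gstar : BoundedContinuousFunction ι Y) t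
        = (N : ℝ)⁻¹ • ∑ j ∈ Finset.range N, (gs j : BoundedContinuousFunction ι Y) t := by
      rw [hgstardef]
      push_cast
      rw [BoundedContinuousFunction.smul_apply, BoundedContinuousFunction.sum_apply]
    have hdiff_t : (f₁ : BoundedContinuousFunction ι Y) t
          - (gstar : BoundedContinuousFunction ι Y) t
        = (N : ℝ)⁻¹ • ∑ j ∈ Finset.range N,
            ((f₁ : BoundedContinuousFunction ι Y) t
              - (gs j : BoundedContinuousFunction ι Y) t) := by
      rw [hgstar_t, Finset.sum_sub_distrib, Finset.sum_const, Finset.card_range, smul_sub]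
      congr 1
      rw [← Nat.cast_smul_eq_nsmul ℝ, smul_smul, inv_mul_cancel₀ (ne_of_gt hNpos), one_smul]
    have hdiff_norm : ‖(f₁ : BoundedContinuousFunction ι Y) t
          - (gstar : BoundedContinuousFunction ι Y) t‖
        ≤ (N:ℝ)⁻¹ * ∑ j ∈ Finset.range N,
            ‖(f₁ : BoundedContinuousFunction ι Y) t
              - (gs j : BoundedContinuousFunction ι Y) t‖ := by
      rw [hdiff_t, norm_smul, Real.norm_eq_abs, abs_of_pos (by positivity)]
      apply mul_le_mul_of_nonneg_left (norm_sum_le _ _) (by positivity)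
    have hf₁t : ‖(f₁ : BoundedContinuousFunction ι Y) t‖ ≤ 1 := by
      refine le_trans (norm_coe_le_norm _ t) ?_
      rw [← Submodule.coe_norm]
      exact hf₁n
    have hgst : ∀ j, ‖(gs j : BoundedContinuousFunction ι Y) t‖ ≤ 1 := by
      intro j
      refine le_trans (norm_coe_le_norm _ t) ?_
      rw [← Submodule.coe_norm]
      exact gs_norm j
    rw [hcoe]
    by_cases htK : t ∈ K₀
    · -- on K₀ every approximant is close to f₁
      have hsmall : ∀ j ∈ Finset.range N, ‖(f₁ : BoundedContinuousFunction ι Y) t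
          - (gs j : BoundedContinuousFunction ι Y) t‖ ≤ δ :=
        fun j _ => gs_close j t (hK₀sub j htK)
      have hsum : ∑ j ∈ Finset.range N, ‖(f₁ : BoundedContinuousFunction ι Y) t
          - (gs j : BoundedContinuousFunction ι Y) t‖ ≤ N * δ := by
        have := Finset.sum_le_card_nsmul (Finset.range N) _ δ hsmall
        rwa [Finset.card_range, nsmul_eq_mul] at this
      have hgt : ‖(g : BoundedContinuousFunction ι Y) t‖ ≤ 1 := by
        refine le_trans (norm_coe_le_norm _ t) ?_
        rw [← Submodule.coe_norm]
        exact hgn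
      calc ‖(g : BoundedContinuousFunction ι Y) t
            + ((f₁ : BoundedContinuousFunction ι Y) t
              - (gstar : BoundedContinuousFunction ι Y) t)‖
          ≤ ‖(g : BoundedContinuousFunction ι Y) t‖
            + ‖(f₁ : BoundedContinuousFunction ι Y) t
              - (gstar : BoundedContinuousFunction ι Y) t‖ := norm_add_le _ _
        _ ≤ 1 + (N:ℝ)⁻¹ * (N * δ) := by
            apply add_le_add hgt
            refine le_trans hdiff_norm ?_
            exact mul_le_mul_of_nonneg_left hsum (by positivity)
        _ = 1 + δ := by field_simp
        _ ≤ 1 + 2 * δ + 2 / N := by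
            have : (0:ℝ) < 2 / N := by positivity
            linarith
    · -- off K₀ the function g is small
      have hgt : ‖(g : BoundedContinuousFunction ι Y) t‖ ≤ δ := by
        rw [hK₀def] at htK
        simp only [Set.mem_setOf_eq, not_le] at htK
        exact htK.le
      -- bound for the sum of distances
      have hq_sum : ∑ j ∈ Finset.range N, ‖(f₁ : BoundedContinuousFunction ι Y) t
          - (gs j : BoundedContinuousFunction ι Y) t‖ ≤ ((N:ℝ) - 1) * (1 + δ) + 2 := by
        set B : Finset ℕ := (Finset.range N).filter
          (fun j => δ ≤ ‖(gs j : BoundedContinuousFunction ι Y) t‖) with hBdef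
        have hq2 : ∀ j, ‖(f₁ : BoundedContinuousFunction ι Y) t
            - (gs j : BoundedContinuousFunction ι Y) t‖ ≤ 2 := by
          intro j
          calc ‖(f₁ : BoundedContinuousFunction ι Y) t
              - (gs j : BoundedContinuousFunction ι Y) t‖
              ≤ ‖(f₁ : BoundedContinuousFunction ι Y) t‖
                + ‖(gs j : BoundedContinuousFunction ι Y) t‖ := norm_sub_le _ _
            _ ≤ 2 := by linarith [hf₁t, hgst j]
        have hqsmall : ∀ j, ¬ δ ≤ ‖(gs j : BoundedContinuousFunction ι Y) t‖ →
            ‖(f₁ : BoundedContinuousFunction ι Y) t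
              - (gs j : BoundedContinuousFunction ι Y) t‖ ≤ 1 + δ := by
          intro j hj
          push_neg at hj
          calc ‖(f₁ : BoundedContinuousFunction ι Y) t
              - (gs j : BoundedContinuousFunction ι Y) t‖
              ≤ ‖(f₁ : BoundedContinuousFunction ι Y) t‖
                + ‖(gs j : BoundedContinuousFunction ι Y) t‖ := norm_sub_le _ _
            _ ≤ 1 + δ := by linarith [hf₁t, hj.le]
        rcases B.eq_empty_or_nonempty with hB | hBne
        · have hall : ∀ j ∈ Finset.range N, ‖(f₁ : BoundedContinuousFunction ι Y) t
              - (gs j : BoundedContinuousFunction ι Y) t‖ ≤ 1 + δ := by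
            intro j hj
            apply hqsmall j
            intro hcon
            have : j ∈ B := Finset.mem_filter.mpr ⟨hj, hcon⟩
            rw [hB] at this
            exact absurd this (Finset.notMem_empty j)
          have := Finset.sum_le_card_nsmul (Finset.range N) _ (1 + δ) hall
          rw [Finset.card_range, nsmul_eq_mul] at this
          refine le_trans this ?_
          have h1δ : (1:ℝ) + δ ≤ 2 := by linarith
          nlinarith [hNpos]
        · set j₀ := B.min' hBne with hj₀def
          have hj₀B : j₀ ∈ B := B.min'_mem hBne
          have hj₀mem : j₀ ∈ Finset.range N := (Finset.mem_filter.mp hj₀B).1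
          have hj₀lvl : δ ≤ ‖(gs j₀ : BoundedContinuousFunction ι Y) t‖ :=
            (Finset.mem_filter.mp hj₀B).2
          have hterm : ∀ j ∈ (Finset.range N).erase j₀,
              ‖(f₁ : BoundedContinuousFunction ι Y) t
                - (gs j : BoundedContinuousFunction ι Y) t‖ ≤ 1 + δ := by
            intro j hj
            obtain ⟨hne, hjr⟩ := Finset.mem_erase.mp hj
            rcases lt_or_gt_of_ne hne with hlt | hgtj
            · -- j < j₀ : j is not in B
              apply hqsmall j
              intro hcon
              have hjB : j ∈ B := Finset.mem_filter.mpr ⟨hjr, hcon⟩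
              have := B.min'_le j hjB
              omega
            · -- j > j₀ : t belongs to st j
              have ht' : t ∈ (st (j₀ + 1)).1 := lvl_sub j₀ hj₀lvl
              have ht'' : t ∈ (st j).1 := st_mono (Nat.succ_le_of_lt hgtj) ht'
              have := gs_close j t ht''
              linarith
          have hsplit : ∑ j ∈ Finset.range N, ‖(f₁ : BoundedContinuousFunction ι Y) t
              - (gs j : BoundedContinuousFunction ι Y) t‖
              = ‖(f₁ : BoundedContinuousFunction ι Y) t
                - (gs j₀ : BoundedContinuousFunction ι Y) t‖
                + ∑ j ∈ (Finset.range N).erase j₀,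
                  ‖(f₁ : BoundedContinuousFunction ι Y) t
                    - (gs j : BoundedContinuousFunction ι Y) t‖ :=
            (Finset.add_sum_erase _ _ hj₀mem).symm
          rw [hsplit]
          have herase : ∑ j ∈ (Finset.range N).erase j₀,
              ‖(f₁ : BoundedContinuousFunction ι Y) t
                - (gs j : BoundedContinuousFunction ι Y) t‖ ≤ ((N:ℝ) - 1) * (1 + δ) := by
            have := Finset.sum_le_card_nsmul ((Finset.range N).erase j₀) _ (1 + δ) hterm
            rw [Finset.card_erase_of_mem hj₀mem, Finset.card_range, nsmul_eq_mul] at this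
            refine le_trans this (le_of_eq ?_)
            congr 1
            rw [Nat.cast_sub hN1, Nat.cast_one]
          linarith [hq2 j₀, herase]
      calc ‖(g : BoundedContinuousFunction ι Y) t
            + ((f₁ : BoundedContinuousFunction ι Y) t
              - (gstar : BoundedContinuousFunction ι Y) t)‖
          ≤ ‖(g : BoundedContinuousFunction ι Y) t‖
            + ‖(f₁ : BoundedContinuousFunction ι Y) t
              - (gstar : BoundedContinuousFunction ι Y) t‖ := norm_add_le _ _
        _ ≤ δ + (N:ℝ)⁻¹ * (((N:ℝ) - 1) * (1 + δ) + 2) := by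
            apply add_le_add hgt
            refine le_trans hdiff_norm ?_
            exact mul_le_mul_of_nonneg_left hq_sum (by positivity)
        _ ≤ 1 + 2 * δ + 2 / N := by
            have hexp : (N:ℝ)⁻¹ * (((N:ℝ) - 1) * (1 + δ) + 2)
                = ((N:ℝ) - 1) / N * (1 + δ) + 2 / N := by
              field_simp
              try ring
            rw [hexp]
            have hfrac : ((N:ℝ) - 1) / N ≤ 1 := by
              rw [div_le_one hNpos]
              linarith
            have h1 : ((N:ℝ) - 1) / N * (1 + δ) ≤ 1 * (1 + δ) := by
              apply mul_le_mul_of_nonneg_right hfrac (by linarith)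
            rw [one_mul] at h1
            linarith
  · -- value bound
    have hφgstar : φ gstar ≤ Pval hsep hA φ f₁ + ε := by
      rw [hgstardef, map_smul, map_sum]
      have hsum : ∑ j ∈ Finset.range N, φ (gs j) ≤ N * (Pval hsep hA φ f₁ + ε) := by
        have := Finset.sum_le_card_nsmul (Finset.range N) (fun j => φ (gs j))
          (Pval hsep hA φ f₁ + ε) (fun j _ => by
            have := gs_phi j
            rw [abs_le] at this
            linarith [this.2])
        rwa [Finset.card_range, nsmul_eq_mul] at this
      calc (N:ℝ)⁻¹ • ∑ j ∈ Finset.range N, φ (gs j)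
          ≤ (N:ℝ)⁻¹ * (N * (Pval hsep hA φ f₁ + ε)) := by
            rw [smul_eq_mul]
            exact mul_le_mul_of_nonneg_left hsum (by positivity)
        _ = Pval hsep hA φ f₁ + ε := by
            field_simp
    have e1 : φ (g + f₁ - gstar) = φ g + φ f₁ - φ gstar := by
      rw [map_sub, map_add]
    rw [e1]
    linarith

include hTcont in
set_option maxHeartbeats 1600000 in
lemma Pmap_norm_ge (φ : ↥(perfektE T) →L[ℝ] ℝ) {η : ℝ} (hη : 0 < η) :
    ‖Pmap hTcont hsep hA φ‖ + ‖φ - Pmap hTcont hsep hA φ‖ ≤ ‖φ‖ + η := by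
  classical
  set Pφ := Pmap hTcont hsep hA φ with hPφdef
  set ψ := φ - Pφ with hψdef
  -- parameters
  set ε : ℝ := η / 8 with hεdef
  have hε : 0 < ε := by rw [hεdef]; positivity
  set δ : ℝ := min 1 (η / (8 * (‖φ‖ + 1))) with hδdef
  have hδ : 0 < δ := by
    rw [hδdef]
    apply lt_min one_pos
    positivity
  have hδ1 : δ ≤ 1 := min_le_left _ _
  have hδη : (‖φ‖ + 1) * (2 * δ) ≤ η / 4 := by
    have h1 : δ ≤ η / (8 * (‖φ‖ + 1)) := min_le_right _ _
    have h2 : (0:ℝ) < ‖φ‖ + 1 := by positivity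
    calc (‖φ‖ + 1) * (2 * δ) ≤ (‖φ‖ + 1) * (2 * (η / (8 * (‖φ‖ + 1)))) := by
          apply mul_le_mul_of_nonneg_left (by linarith) h2.le
      _ = η / 4 := by field_simp; ring
  obtain ⟨N, hNgt⟩ := exists_nat_gt (8 * (‖φ‖ + 1) / η)
  have hN1 : 1 ≤ N := by
    by_contra hc
    push_neg at hc
    interval_cases N
    simp only [Nat.cast_zero] at hNgt
    have : (0:ℝ) < 8 * (‖φ‖ + 1) / η := by positivity
    linarith
  have hNpos : (0:ℝ) < N := by exact_mod_cast Nat.lt_of_lt_of_le Nat.zero_lt_one hN1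
  have hNη : (‖φ‖ + 1) * (2 / N) ≤ η / 4 := by
    have h2 : (0:ℝ) < ‖φ‖ + 1 := by positivity
    have h3 : 8 * (‖φ‖ + 1) < N * η := by rwa [div_lt_iff₀ hη] at hNgt
    have h4 : (‖φ‖ + 1) * (2 / N) = ((‖φ‖ + 1) * 2) / N := by ring
    rw [h4, div_le_div_iff₀ hNpos (by norm_num : (0:ℝ) < 4)]
    nlinarith
  -- norming elements
  obtain ⟨f₁, hf₁n, hf₁⟩ := exists_norming ψ hε
  obtain ⟨u, hun, hu⟩ := exists_norming Pφ hε
  -- a norming element of the unit ball of E₀ for Pφ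
  have hgex : ∃ g : ↥(perfektE T),
      ZeroAtInfty ((g : BoundedContinuousFunction ι Y)) ∧ ‖g‖ ≤ 1 ∧ ‖Pφ‖ - 2 * ε ≤ φ g := by
    have hPu : ‖Pφ‖ - 2 * ε < Pval hsep hA φ u := by
      have : Pφ u = Pval hsep hA φ u := rfl
      rw [← this]
      linarith
    have hev : ∀ᶠ n in (hyperfilter ℕ : Filter ℕ),
        ‖Pφ‖ - 2 * ε < φ (apx hsep hA u n) :=
      (tendsto_Pval hsep hA φ u).eventually (eventually_gt_nhds hPu)
    obtain ⟨n, hn⟩ := hev.exists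
    exact ⟨apx hsep hA u n, apx_zai hsep hA u n,
      le_trans (apx_norm hsep hA u n) hun, hn.le⟩
  obtain ⟨g, hgzai, hgn, hgφ⟩ := hgex
  obtain ⟨h, hhn, hhφ⟩ := exists_good_h hTcont hsep hA φ f₁ g hf₁n hgzai hgn hδ hδ1 hε N hN1
  -- combine
  have hψf₁ : ‖ψ‖ - ε ≤ ψ f₁ := hf₁
  have hφf₁ : φ f₁ - Pval hsep hA φ f₁ = ψ f₁ := by
    rw [hψdef, ContinuousLinearMap.sub_apply]
    have : Pφ f₁ = Pval hsep hA φ f₁ := rfl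
    rw [this]
  have hkey : ‖Pφ‖ + ‖ψ‖ - 4 * ε ≤ φ h := by
    linarith [hhφ, hφf₁, hgφ, hψf₁]
  have hφh : φ h ≤ ‖φ‖ * (1 + 2 * δ + 2 / N) := by
    calc φ h ≤ ‖φ h‖ := le_abs_self _
      _ ≤ ‖φ‖ * ‖h‖ := φ.le_opNorm h
      _ ≤ ‖φ‖ * (1 + 2 * δ + 2 / N) :=
          mul_le_mul_of_nonneg_left hhn (ContinuousLinearMap.opNorm_nonneg φ)
  have hexpand : ‖φ‖ * (1 + 2 * δ + 2 / N) ≤ ‖φ‖ + η / 4 + η / 4 := by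
    have h1 : ‖φ‖ * (2 * δ) ≤ (‖φ‖ + 1) * (2 * δ) := by
      apply mul_le_mul_of_nonneg_right (by linarith) (by positivity)
    have h2 : ‖φ‖ * (2 / N) ≤ (‖φ‖ + 1) * (2 / N) := by
      apply mul_le_mul_of_nonneg_right (by linarith) (by positivity)
    have : ‖φ‖ * (1 + 2 * δ + 2 / N) = ‖φ‖ + ‖φ‖ * (2 * δ) + ‖φ‖ * (2 / N) := by ring
    rw [this]
    linarith [hδη, hNη]
  have hfin : ‖Pφ‖ + ‖ψ‖ ≤ ‖φ‖ + η / 2 + 4 * ε := by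
    linarith
  rw [hεdef] at hfin
  linarith

end Pdef

end PerfektProof

section Perfekt

variable {X Y ι : Type*}
  [NormedAddCommGroup X] [NormedSpace ℝ X] [CompleteSpace X]
  [NormedAddCommGroup Y] [NormedSpace ℝ Y] [CompleteSpace Y]
  [TopologicalSpace ι] [LocallyCompactSpace ι] [T2Space ι]

/-- In the Perfekt setup, under the density assumption (A), `E₀` is an M-ideal in
`(E, ‖·‖_∞)`. -/
theorem perfekt_mIdeal
    (T : ι → X →L[ℝ] Y) (hTinj : Function.Injective T)
    (hTcont : ∀ x : X, Continuous fun i => T i x)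
    (hrefl : Function.Surjective (NormedSpace.inclusionInDoubleDual ℝ X))
    (hsep : ∀ x : X, (∃ C : ℝ, ∀ i, ‖T i x‖ ≤ C) → (∀ i, T i x = 0) → x = 0)
    (hclosed : IsClosed ((perfektE T : Set (BoundedContinuousFunction ι Y))))
    (hA : ∀ f ∈ perfektE T, ‖f‖ ≤ 1 → ∀ x : X, (∀ i, f i = T i x) → ∀ ε > (0 : ℝ),
      ∃ g ∈ perfektE T ⊓ zeroAtInftySubmodule ι Y, ‖g‖ ≤ 1 ∧
        ∃ x₀ : X, (∀ i, g i = T i x₀) ∧ ‖x - x₀‖ ≤ ε) :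
    IsMIdeal {f : ↥(perfektE T) | ZeroAtInfty (f : BoundedContinuousFunction ι Y)} := by
  refine ⟨PerfektProof.Pmap hTcont hsep hA, PerfektProof.Pmap_idem hTcont hsep hA, ?_, ?_⟩
  · intro φ
    rw [PerfektProof.Pmap_zero_iff hTcont hsep hA φ]
    constructor
    · intro h y hy
      exact h y hy
    · intro h y hy
      exact h y hy
  · intro φ
    have hle : ‖φ‖ ≤ ‖PerfektProof.Pmap hTcont hsep hA φ‖
        + ‖φ - PerfektProof.Pmap hTcont hsep hA φ‖ := by
      have : φ = PerfektProof.Pmap hTcont hsep hA φ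
          + (φ - PerfektProof.Pmap hTcont hsep hA φ) := by abel
      calc ‖φ‖ = ‖PerfektProof.Pmap hTcont hsep hA φ
            + (φ - PerfektProof.Pmap hTcont hsep hA φ)‖ := by rw [← this]
        _ ≤ _ := ContinuousLinearMap.opNorm_add_le _ _
    have hge : ‖PerfektProof.Pmap hTcont hsep hA φ‖
        + ‖φ - PerfektProof.Pmap hTcont hsep hA φ‖ ≤ ‖φ‖ := by
      apply le_of_forall_pos_le_add
      intro η hη
      exact PerfektProof.Pmap_norm_ge hTcont hsep hA φ hη
    linarith


end Perfekt
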